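/- For every n ≥ 0 and every word v of length n over {a,b}, the minimal period of ψ(v) satisfies π(ψ(v)) ≤ π(ψ(v^(n))) = F_{n−1}, with equality exactly when v is one of v^(n), E(v^(n)), c(v^(n)), E(c(v^(n))). -/

import Mathlib

def palClosure (w : List Bool) : List Bool :=
  let k := Nat.find (p := fun k => (w.drop k).reverse = w.drop k)
    ⟨w.length, by simp⟩
  w.take k ++ w.drop k ++ (w.take k).reverse

def psi (v : List Bool) : List Bool := v.foldl (fun w x => palClosure (w ++ [x])) []

def E (v : List Bool) : List Bool := v.map (!·)

def mu (x : Bool) (w : List Bool) : List Bool := w.flatMap (fun y => if y = x then [x] else [x, y])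

def muW : List Bool → List Bool → List Bool
  | [], w => w
  | x :: v, w => mu x (muW v w)

def vN (n : ℕ) : List Bool := (List.range n).map (fun i => decide (i % 2 = 1))

def fibF : ℕ → ℕ
  | 0 => 1
  | 1 => 1
  | n + 2 => fibF (n + 1) + fibF n

def HasPeriod (w : List Bool) (p : ℕ) : Prop :=
  0 < p ∧ ∀ i j (hi : i < w.length) (hj : j < w.length),
    i % p = j % p → w.get ⟨i, hi⟩ = w.get ⟨j, hj⟩

noncomputable def minPeriod (w : List Bool) : ℕ := sInf {p | HasPeriod w p}

def dOp : List Bool → List Bool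
  | x :: y :: u => y :: x :: u
  | w => w

def cOp (v : List Bool) : List Bool := (dOp v.reverse).reverse

def contAux : List ℕ → ℕ
  | [] => 1
  | [a] => a
  | a :: b :: t => a * contAux (b :: t) + contAux t


namespace Per

theorem hp_get {w p} (h : HasPeriod w p) {i j} (hi : i < w.length) (hj : j < w.length)
    (hij : i % p = j % p) : w[i] = w[j] := h.2 i j hi hj hij

theorem hp_shift {w p} (h : HasPeriod w p) {i} (hh : i + p < w.length) :
    w[i]'(by omega) = w[i+p]'hh :=
  hp_get h (by omega) hh (by simp [Nat.add_mod_right])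

theorem hasPeriod_of_shift {w : List Bool} {p : ℕ} (hp : 0 < p)
    (h : ∀ i (hh : i + p < w.length), w[i]'(by omega) = w[i+p]'hh) : HasPeriod w p := by
  have aux : ∀ k i (hi : i + k * p < w.length), w[i]'(by nlinarith [Nat.zero_le (k*p)]) = w[i + k*p]'hi := by
    intro k
    induction k with
    | zero => simp
    | succ k ih =>
      intro i hi
      have hp1 : i + p < w.length := by nlinarith
      have h2 := ih (i + p) (by nlinarith)
      have h3 := h i hp1
      rw [h3, h2]
      congr 1
      ring
  constructor
  · exact hp
  intro i j hi hj hij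
  simp only [List.get_eq_getElem]
  rcases Nat.le_total i j with hle | hle
  · obtain ⟨k, hk⟩ := (Nat.modEq_iff_dvd' hle).mp hij
    have : j = i + k * p := by rw [Nat.mul_comm]; omega
    subst this; exact aux k i hj
  · obtain ⟨k, hk⟩ := (Nat.modEq_iff_dvd' hle).mp hij.symm
    have : i = j + k * p := by rw [Nat.mul_comm]; omega
    subst this; exact (aux k j hi).symm


theorem hasPeriod_take {w : List Bool} {p m : ℕ} (h : HasPeriod w p) :
    HasPeriod (w.take m) p := by
  refine ⟨h.1, fun i j hi hj hij => ?_⟩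
  simp only [List.get_eq_getElem, List.getElem_take]
  exact hp_get h (by simp at hi; omega) (by simp at hj; omega) hij

theorem hasPeriod_prefix {u t : List Bool} {p : ℕ} (h : HasPeriod (u ++ t) p) :
    HasPeriod u p := by
  have := hasPeriod_take (m := u.length) h
  rwa [List.take_left] at this

theorem hasPeriod_big {w : List Bool} {p : ℕ} (hp : 0 < p) (hlen : w.length ≤ p) :
    HasPeriod w p := by
  refine ⟨hp, fun i j hi hj hij => ?_⟩
  have : i = j := by
    rwa [Nat.mod_eq_of_lt (by omega), Nat.mod_eq_of_lt (by omega)] at hij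
  subst this; rfl

theorem minPeriod_le {w : List Bool} {p : ℕ} (h : HasPeriod w p) : minPeriod w ≤ p :=
  Nat.sInf_le h

theorem minPeriod_hasPeriod (w : List Bool) : HasPeriod w (minPeriod w) := by
  have hne : {p | HasPeriod w p}.Nonempty :=
    ⟨w.length + 1, hasPeriod_big (by omega) (by omega)⟩
  exact Nat.sInf_mem hne

theorem minPeriod_eq {w : List Bool} {p : ℕ} (h : HasPeriod w p)
    (hmin : ∀ r, HasPeriod w r → p ≤ r) : minPeriod w = p :=
  le_antisymm (minPeriod_le h) (hmin _ (minPeriod_hasPeriod w))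

theorem pal_get {w : List Bool} (hw : w.reverse = w) {i} (h : i < w.length) :
    w[i] = w[w.length - 1 - i]'(by omega) := by
  have h2 : i < w.reverse.length := by simpa
  have e1 : w.reverse[i]'h2 = w[w.length - 1 - i]'(by omega) := by
    rw [List.getElem_reverse]
  rw [← e1]
  simp only [hw]

theorem pal_of_get {w : List Bool}
    (h : ∀ i (hi : i < w.length), w[i] = w[w.length - 1 - i]'(by omega)) :
    w.reverse = w := by
  apply List.ext_getElem (by simp)
  intro i h1 h2
  rw [List.getElem_reverse]
  have := h (w.length - 1 - i) (by omega)
  rw [this]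
  congr 1
  omega


theorem hp_mod {w : List Bool} {p : ℕ} (h : HasPeriod w p) {i} (hi : i < w.length) :
    w[i] = w[i % p]'(by have := Nat.mod_le i p; omega) :=
  hp_get h hi _ ((Nat.mod_mod_of_dvd i dvd_rfl).symm)

theorem fw_aux : ∀ s : ℕ, ∀ (w : List Bool) (p q : ℕ), p + q = s → p ≤ q →
    HasPeriod w p → HasPeriod w q → p + q ≤ w.length + Nat.gcd p q →
    HasPeriod w (Nat.gcd p q) := by
  intro s
  induction s using Nat.strong_induction_on with
  | _ s ih =>
    intro w p q hs hpq hp hq hlen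
    rcases eq_or_lt_of_le hpq with heq | hlt
    · subst heq
      simpa [Nat.gcd_self] using hp
    -- p < q
    have hp0 : 0 < p := hp.1
    have hq0 : 0 < q := hq.1
    set g := Nat.gcd p q with hg
    have hgp : g ∣ p := Nat.gcd_dvd_left _ _
    have hgq : g ∣ q := Nat.gcd_dvd_right _ _
    have hg0 : 0 < g := Nat.gcd_pos_of_pos_left _ hp0
    have hgle : g ≤ p := Nat.le_of_dvd hp0 hgp
    have hqpg : g ∣ q - p := (Nat.dvd_sub hgq hgp)
    have hqp : q - p ≥ g := Nat.le_of_dvd (by omega) hqpg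
    have hlenq : q ≤ w.length := by omega
    set n := w.length with hn
    set u := w.take (n - p) with hu
    have hulen : u.length = n - p := by
      simp [hu, hn]
    have hup : HasPeriod u p := hasPeriod_take hp
    have huq' : HasPeriod u (q - p) := by
      apply hasPeriod_of_shift (by omega)
      intro i hh
      rw [hulen] at hh
      simp only [hu, List.getElem_take]
      have e1 : w[i]'(by omega) = w[i + q]'(by omega) := by
        apply hp_get hq (by omega) (by omega)
        simp [Nat.add_mod_right]
      have e2 : w[i + (q - p)]'(by omega) = w[i + q]'(by omega) := by
        apply hp_get hp (by omega) (by omega)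
        have : i + q = i + (q - p) + p := by omega
        rw [this, Nat.add_mod_right]
      rw [e1, e2]
    have hgcd2 : Nat.gcd p (q - p) = g := by
      rw [hg, Nat.gcd_comm p q, ← Nat.gcd_sub_self_left (le_of_lt hlt), Nat.gcd_comm]
    have hu_g : HasPeriod u g := by
      rcases Nat.le_total p (q - p) with hle2 | hle2
      · have := ih (p + (q - p)) (by omega) u p (q - p) rfl hle2 hup huq' ?_
        · rwa [hgcd2] at this
        · rw [hulen, hgcd2]; omega
      · have := ih ((q - p) + p) (by omega) u (q - p) p rfl hle2 huq' hup ?_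
        · rwa [Nat.gcd_comm, hgcd2] at this
        · rw [hulen, Nat.gcd_comm, hgcd2]; omega
    -- extension back to w
    have hn2p : 2 * p ≤ n := by omega
    refine ⟨hg0, fun i j hi hj hij => ?_⟩
    simp only [List.get_eq_getElem]
    have ei : w[i] = w[i % p]'(by have := Nat.mod_lt i hp0; omega) := hp_mod hp hi
    have ej : w[j] = w[j % p]'(by have := Nat.mod_lt j hp0; omega) := hp_mod hp hj
    rw [ei, ej]
    have hip : i % p < u.length := by
      rw [hulen]; have := Nat.mod_lt i hp0; omega
    have hjp : j % p < u.length := by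
      rw [hulen]; have := Nat.mod_lt j hp0; omega
    have := hp_get hu_g hip hjp (by
      rw [Nat.mod_mod_of_dvd _ hgp, Nat.mod_mod_of_dvd _ hgp, hij])
    simpa only [hu, List.getElem_take] using this

theorem fine_wilf {w : List Bool} {p q : ℕ} (hp : HasPeriod w p) (hq : HasPeriod w q)
    (hlen : p + q ≤ w.length + Nat.gcd p q) : HasPeriod w (Nat.gcd p q) := by
  rcases Nat.le_total p q with h | h
  · exact fw_aux (p+q) w p q rfl h hp hq hlen
  · rw [Nat.gcd_comm]
    exact fw_aux (q+p) w q p rfl h hq hp (by rwa [Nat.gcd_comm, Nat.add_comm] at hlen)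

end Per

namespace Per

theorem psi_append (v : List Bool) (x : Bool) :
    psi (v ++ [x]) = palClosure (psi v ++ [x]) := by
  simp [psi, List.foldl_append]

theorem palClosure_eq {u : List Bool} {k : ℕ} (hk : (u.drop k).reverse = u.drop k)
    (hmin : ∀ j, j < k → ¬((u.drop j).reverse = u.drop j)) :
    palClosure u = u ++ (u.take k).reverse := by
  unfold palClosure
  have hfind : Nat.find (p := fun k => (u.drop k).reverse = u.drop k)
      ⟨u.length, by simp⟩ = k := by
    rw [Nat.find_eq_iff]
    exact ⟨hk, hmin⟩
  simp only [hfind, List.take_append_drop]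

theorem pal_append_rev_take {u : List Bool} {k : ℕ} (hk : (u.drop k).reverse = u.drop k) :
    (u ++ (u.take k).reverse).reverse = u ++ (u.take k).reverse := by
  have h1 : (u ++ (u.take k).reverse).reverse = u.take k ++ u.reverse := by simp
  have h2 : u.reverse = u.drop k ++ (u.take k).reverse := by
    rw [← hk, ← List.reverse_append, List.take_append_drop]
  rw [h1, h2, ← List.append_assoc, List.take_append_drop]

end Per
namespace Per

def stR : List Bool → Bool → ℕ
  | [], _ => 1
  | x :: v, y => if y = x then stR v x else stR v false + stR v true

def stF (v : List Bool) (x : Bool) : ℕ := stR v.reverse x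

@[simp] theorem stF_nil (x : Bool) : stF [] x = 1 := rfl

theorem stF_append (v : List Bool) (x y : Bool) :
    stF (v ++ [x]) y = if y = x then stF v x else stF v false + stF v true := by
  simp [stF, stR, List.reverse_append]

theorem stR_pos (l : List Bool) (x : Bool) : 1 ≤ stR l x := by
  induction l generalizing x with
  | nil => simp [stR]
  | cons a l ih =>
    simp only [stR]
    split
    · exact ih a
    · have := ih false; omega

theorem stF_pos (v : List Bool) (x : Bool) : 1 ≤ stF v x := stR_pos _ _

theorem stF_sum_eq (v : List Bool) (x : Bool) :
    stF v false + stF v true = stF v x + stF v (!x) := by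
  cases x <;> simp [Nat.add_comm]


-- getD-based access lemmas
theorem gD_append_left {l r : List Bool} {i : ℕ} (h : i < l.length) :
    (l++r).getD i false = l.getD i false := List.getD_append l r false i h

theorem gD_append_right {l r : List Bool} {i : ℕ} (h : l.length ≤ i) :
    (l++r).getD i false = r.getD (i - l.length) false := List.getD_append_right l r false i h

theorem gD_drop (l : List Bool) (m i : ℕ) : (l.drop m).getD i false = l.getD (m+i) false := by
  simp [List.getD_eq_getElem?_getD, List.getElem?_drop]

theorem gD_take {l : List Bool} {m i : ℕ} (h : i < m) :
    (l.take m).getD i false = l.getD i false := by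
  simp [List.getD_eq_getElem?_getD, List.getElem?_take, h]

theorem gD_reverse {l : List Bool} {i : ℕ} (h : i < l.length) :
    l.reverse.getD i false = l.getD (l.length - 1 - i) false := by
  rw [List.getD_eq_getElem (hn := by simpa), List.getD_eq_getElem (hn := by omega),
    List.getElem_reverse]

theorem hpD {w : List Bool} {p : ℕ} (h : HasPeriod w p) {i j : ℕ} (hi : i < w.length)
    (hj : j < w.length) (hij : i % p = j % p) : w.getD i false = w.getD j false := by
  rw [List.getD_eq_getElem (hn := hi), List.getD_eq_getElem (hn := hj)]
  exact hp_get h hi hj hij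

theorem palD {w : List Bool} (hw : w.reverse = w) {i : ℕ} (h : i < w.length) :
    w.getD i false = w.getD (w.length - 1 - i) false := by
  rw [List.getD_eq_getElem (hn := h), List.getD_eq_getElem (hn := by omega)]
  exact pal_get hw h

theorem pal_of_getD {w : List Bool}
    (h : ∀ i, i < w.length → w.getD i false = w.getD (w.length - 1 - i) false) :
    w.reverse = w := by
  apply pal_of_get
  intro i hi
  have := h i hi
  rwa [List.getD_eq_getElem (hn := hi), List.getD_eq_getElem (hn := by omega)] at this

theorem hasPeriod_of_shiftD {w : List Bool} {p : ℕ} (hp : 0 < p)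
    (h : ∀ i, i + p < w.length → w.getD i false = w.getD (i+p) false) : HasPeriod w p := by
  apply hasPeriod_of_shift hp
  intro i hh
  have := h i hh
  rwa [List.getD_eq_getElem (hn := by omega), List.getD_eq_getElem (hn := hh)] at this

structure Inv (v : List Bool) : Prop where
  pal : (psi v).reverse = psi v
  len : (psi v).length + 2 = stF v false + stF v true
  gcd1 : Nat.gcd (stF v false) (stF v true) = 1
  hp : ∀ x, HasPeriod (psi v ++ [x]) (stF v x)
  hmin : ∀ x r, HasPeriod (psi v ++ [x]) r → stF v x ≤ r
  sym : ∀ x i j, i < (psi v).length → j < (psi v).length →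
      i + j + 3 = stF v x → (psi v).getD i false = (psi v).getD j false
  pen : ∀ x, 2 ≤ stF v x → (psi v).getD (stF v x - 2) false = !x
  lst : ∀ x, (psi v ++ [x]).getD (stF v x - 1) false = x

theorem inv_nil : Inv [] := by
  have hpsi : psi [] = [] := rfl
  refine ⟨by simp [hpsi], by simp [hpsi], by simp, ?_, ?_, ?_, ?_, ?_⟩
  · intro y
    refine ⟨one_pos, ?_⟩
    intro i j hi hj _
    simp only [hpsi, List.nil_append, List.length_singleton] at hi hj
    have : i = j := by omega
    subst this
    rfl
  · intro y r hr
    exact hr.1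
  · intro y i j hi hj habs
    simp [hpsi] at hi
  · intro y h2
    simp at h2
  · intro y
    simp [hpsi]

end Per

namespace Per

theorem inv_step (v : List Bool) (x : Bool) (ihv : Inv v) : Inv (v ++ [x]) := by
  obtain ⟨hpal, hlen0, hgcd, hhp, hhmin, hsym, hpen, hlst⟩ := ihv
  set w := psi v with hw
  set N := w.length with hN
  set p := stF v x with hpdef
  set q := stF v (!x) with hqdef
  clear_value w N p q
  have hp1 : 1 ≤ p := by rw [hpdef]; exact stF_pos v x
  have hq1 : 1 ≤ q := by rw [hqdef]; exact stF_pos v (!x)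
  have hsum : stF v false + stF v true = p + q := by rw [hpdef, hqdef]; exact stF_sum_eq v x
  have hNpq : N + 2 = p + q := by omega
  have hpN : p ≤ N + 1 := by omega
  have hul : (w ++ [x]).length = N + 1 := by rw [hN]; simp
  have hpu : HasPeriod (w ++ [x]) p := by rw [hpdef]; exact hhp x
  have DuL : ∀ i, i < N → (w ++ [x]).getD i false = w.getD i false := by
    intro i h
    exact gD_append_left (by omega)
  have DuR : (w ++ [x]).getD N false = x := by
    rw [gD_append_right (by omega), show N - w.length = 0 from by omega]
    rfl
  have hlstu : (w ++ [x]).getD (p - 1) false = x := by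
    have := hlst x; rwa [← hpdef] at this
  have hpenx : 2 ≤ p → w.getD (p - 2) false = !x := by
    intro h
    have := hpen x (by rw [← hpdef]; exact h)
    rwa [← hpdef] at this
  have hsymx : ∀ i j, i < N → j < N → i + j + 3 = p → w.getD i false = w.getD j false := by
    intro i j hi hj hij
    exact hsym x i j (by omega) (by omega) (by rw [← hpdef]; omega)
  have hpalD : ∀ i, i < N → w.getD i false = w.getD (N - 1 - i) false := by
    intro i h
    have := palD hpal (i := i) (by omega)
    rwa [← hN] at this
  -- the candidate palindromic suffix
  have hkpal : ((w ++ [x]).drop (p - 1)).reverse = (w ++ [x]).drop (p - 1) := by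
    apply pal_of_getD
    intro t ht
    rw [List.length_drop, hul] at ht
    rw [gD_drop, gD_drop, List.length_drop, hul]
    rw [show p - 1 + (N + 1 - (p - 1) - 1 - t) = N - t from by omega]
    rcases Nat.eq_zero_or_pos t with rfl | ht1
    · rw [Nat.add_zero, Nat.sub_zero, hlstu, DuR]
    · have e1 : (w ++ [x]).getD (p - 1 + t) false = (w ++ [x]).getD (t - 1) false := by
        apply hpD hpu (by omega) (by omega)
        rw [show p - 1 + t = (t - 1) + p from by omega, Nat.add_mod_right]
      have hN1 : 1 ≤ N := by omega
      have e2 : (w ++ [x]).getD (t - 1) false = w.getD (t - 1) false := DuL _ (by omega)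
      have e3 : w.getD (t - 1) false = w.getD (N - t) false := by
        have := hpalD (t - 1) (by omega)
        rwa [show N - 1 - (t - 1) = N - t from by omega] at this
      have e4 : w.getD (N - t) false = (w ++ [x]).getD (N - t) false := (DuL _ (by omega)).symm
      rw [e1, e2, e3, e4]
  have hnot : ∀ j, j < p - 1 → ¬((w ++ [x]).drop j).reverse = (w ++ [x]).drop j := by
    intro j hj hpalj
    have hper : HasPeriod (w ++ [x]) (j + 1) := by
      apply hasPeriod_of_shiftD (by omega)
      intro i hi
      rw [hul] at hi
      have hiN : i < N := by omega
      have e1 : (w ++ [x]).getD i false = w.getD i false := DuL i hiN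
      have e2 : w.getD i false = w.getD (N - 1 - i) false := hpalD i hiN
      have e3 : w.getD (N - 1 - i) false = (w ++ [x]).getD (N - 1 - i) false :=
        (DuL _ (by omega)).symm
      have e4 : (w ++ [x]).getD (N - 1 - i) false = (w ++ [x]).getD (i + (j + 1)) false := by
        have hd := palD (w := (w ++ [x]).drop j) hpalj (i := N - j - 1 - i)
          (by rw [List.length_drop, hul]; omega)
        rw [gD_drop, gD_drop, List.length_drop, hul] at hd
        rw [show j + (N - j - 1 - i) = N - 1 - i from by omega] at hd
        rwa [show j + (N + 1 - j - 1 - (N - j - 1 - i)) = i + (j + 1) from by omega] at hd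
      rw [e1, e2, e3, e4]
    have := hhmin x (j + 1) hper
    rw [← hpdef] at this
    omega
  have hCeq : psi (v ++ [x]) = (w ++ [x]) ++ ((w ++ [x]).take (p - 1)).reverse := by
    rw [psi_append, ← hw]
    exact palClosure_eq hkpal hnot
  set C := (w ++ [x]) ++ ((w ++ [x]).take (p - 1)).reverse with hCdef
  clear_value C
  have htklen : ((w ++ [x]).take (p - 1)).length = p - 1 := by
    rw [List.length_take, hul]; omega
  have hClen : C.length = N + p := by
    rw [hCdef, List.length_append, List.length_reverse, htklen, hul]; omega
  have hCxlen : ∀ y : Bool, (C ++ [y]).length = N + p + 1 := by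
    intro y; rw [List.length_append, hClen]; rfl
  have DCL : ∀ i, i < N + 1 → C.getD i false = (w ++ [x]).getD i false := by
    intro i h
    rw [hCdef]; exact gD_append_left (by omega)
  have DCw : ∀ i, i < N → C.getD i false = w.getD i false := by
    intro i h
    rw [DCL i (by omega)]; exact DuL i h
  have DCN : C.getD N false = x := by rw [DCL N (by omega)]; exact DuR
  have DCR : ∀ t, t < p - 1 → C.getD (N + 1 + t) false = w.getD (p - 2 - t) false := by
    intro t ht
    rw [hCdef, gD_append_right (by omega), hul,
      show N + 1 + t - (N + 1) = t from by omega,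
      gD_reverse (by rw [htklen]; omega), htklen,
      show p - 1 - 1 - t = p - 2 - t from by omega,
      gD_take (by omega)]
    exact DuL _ (by omega)
  have hCpal : C.reverse = C := by rw [hCdef]; exact pal_append_rev_take hkpal
  have hpC : HasPeriod C p := by
    apply hasPeriod_of_shiftD (by omega)
    intro i hi
    rw [hClen] at hi
    have hiN : i < N := by omega
    rcases Nat.lt_or_ge (i + p) (N + 1) with hcase | hcase
    · rw [DCL i (by omega), DCL (i + p) hcase]
      exact hpD hpu (by omega) (by omega) (by rw [Nat.add_mod_right])
    · rw [DCw i hiN, show i + p = N + 1 + (i + p - N - 1) from by omega,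
        DCR _ (by omega), show p - 2 - (i + p - N - 1) = N - 1 - i from by omega]
      exact hpalD i hiN
  have hendx : ∀ y : Bool, (C ++ [y]).getD (N + p) false = y := by
    intro y
    rw [gD_append_right (l := C) (r := [y]) (by omega), hClen,
      show N + p - (N + p) = 0 from by omega]
    rfl
  have hpCx : HasPeriod (C ++ [x]) p := by
    apply hasPeriod_of_shiftD (by omega)
    intro i hi
    rw [hCxlen] at hi
    rcases Nat.lt_or_ge (i + p) (N + p) with hc | hc
    · rw [gD_append_left (l := C) (r := [x]) (by omega),
        gD_append_left (l := C) (r := [x]) (by omega)]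
      exact hpD hpC (by omega) (by omega) (by rw [Nat.add_mod_right])
    · have hiN : i = N := by omega
      subst hiN
      rw [gD_append_left (l := C) (r := [x]) (by omega), DCN]
      exact (hendx x).symm
  have hminCx : ∀ r, HasPeriod (C ++ [x]) r → p ≤ r := by
    intro r hr
    have h1 : HasPeriod ((w ++ [x]) ++ (((w ++ [x]).take (p - 1)).reverse ++ [x])) r := by
      rw [← List.append_assoc, ← hCdef]; exact hr
    have := hhmin x r (hasPeriod_prefix h1)
    rwa [← hpdef] at this
  have hpCx' : HasPeriod (C ++ [!x]) (p + q) := by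
    apply hasPeriod_of_shiftD (by omega)
    intro i hi
    rw [hCxlen] at hi
    have hip : i ≤ p - 2 := by omega
    have hp2 : 2 ≤ p := by omega
    rw [gD_append_left (l := C) (r := [!x]) (by omega), DCw i (by omega)]
    rcases Nat.lt_or_ge (i + (p + q)) (N + p) with hc | hc
    · rw [gD_append_left (l := C) (r := [!x]) (by omega),
        show i + (p + q) = N + 1 + (i + 1) from by omega, DCR (i + 1) (by omega),
        show p - 2 - (i + 1) = p - 3 - i from by omega]
      exact hsymx i (p - 3 - i) (by omega) (by omega) (by omega)
    · rw [show i + (p + q) = N + p from by omega, hendx,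
        show i = p - 2 from by omega]
      exact hpenx hp2
  have hminCx' : ∀ r, HasPeriod (C ++ [!x]) r → p + q ≤ r := by
    intro r hr
    by_contra hcon
    push_neg at hcon
    have hr0 : 0 < r := hr.1
    have hru : HasPeriod (w ++ [x]) r := by
      have h1 : HasPeriod ((w ++ [x]) ++ (((w ++ [x]).take (p - 1)).reverse ++ [!x])) r := by
        rw [← List.append_assoc, ← hCdef]; exact hr
      exact hasPeriod_prefix h1
    have hpr : p ≤ r := by
      have := hhmin x r hru
      rwa [← hpdef] at this
    have hrC : HasPeriod C r := by
      have h2 := hasPeriod_take (m := C.length) hr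
      rwa [List.take_left] at h2
    rcases Nat.lt_or_ge r (p + q - 1) with hcase | hcase
    · have hgcd1 : 1 ≤ Nat.gcd p r := Nat.gcd_pos_of_pos_left _ (by omega)
      have hgC : HasPeriod C (Nat.gcd p r) :=
        fine_wilf hpC hrC (by rw [hClen]; omega)
      have hgu : HasPeriod (w ++ [x]) (Nat.gcd p r) := by
        have h2 := hasPeriod_take (m := N + 1) hgC
        rw [hCdef, ← hul, List.take_left] at h2
        exact h2
      have hpg : p ≤ Nat.gcd p r := by
        have := hhmin x _ hgu
        rwa [← hpdef] at this
      have hgp : Nat.gcd p r ≤ p := Nat.le_of_dvd (by omega) (Nat.gcd_dvd_left p r)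
      have hdvd : p ∣ r := by
        have hgeq : Nat.gcd p r = p := le_antisymm hgp hpg
        exact hgeq ▸ Nat.gcd_dvd_right p r
      obtain ⟨m, hm⟩ := hdvd
      rcases m with _ | k
      · omega
      have hm' : r = p * k + p := by rw [hm]; ring
      have hx1 : (C ++ [!x]).getD (N + p) false = (C ++ [!x]).getD (N + p - r) false := by
        apply hpD hr (by rw [hCxlen]; omega) (by rw [hCxlen]; omega)
        conv_lhs => rw [show N + p = (N + p - r) + r from by omega]
        rw [Nat.add_mod_right]
      have hx2 : (C ++ [!x]).getD (N + p - r) false = C.getD (N + p - r) false :=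
        gD_append_left (l := C) (r := [!x]) (by omega)
      have hx3 : C.getD (N + p - r) false = C.getD N false := by
        apply hpD hpC (by rw [hClen]; omega) (by rw [hClen]; omega)
        conv_rhs => rw [show N = (N + p - r) + p * k from by omega]
        rw [Nat.add_mul_mod_self_left]
      have : (!x) = x := (hendx (!x)).symm.trans (hx1.trans (hx2.trans (hx3.trans DCN)))
      simp at this
    · have hreq : r = p + q - 1 := by omega
      have hy1 : (C ++ [!x]).getD (p - 1) false = x := by
        rw [gD_append_left (l := C) (r := [!x]) (by omega), DCL (p - 1) (by omega)]
        exact hlstu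
      have hy2 : (C ++ [!x]).getD (p - 1) false = (C ++ [!x]).getD (N + p) false := by
        apply hpD hr (by rw [hCxlen]; omega) (by rw [hCxlen]; omega)
        conv_rhs => rw [show N + p = (p - 1) + r from by omega]
        rw [Nat.add_mod_right]
      have : x = !x := hy1.symm.trans (hy2.trans (hendx (!x)))
      simp at this
  have hstF : ∀ y, stF (v ++ [x]) y = if y = x then p else p + q := by
    intro y
    rw [stF_append]
    by_cases hyx : y = x
    · simp only [hyx, if_pos rfl]
      exact hpdef.symm
    · simp only [hyx, if_neg hyx, if_false]
      exact hsum
  have hxne : ∀ y : Bool, y ≠ x → y = !x := by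
    intro y hy
    cases x <;> cases y <;> revert hy <;> decide
  constructor
  case pal => rw [hCeq]; exact hCpal
  case len =>
    rw [hCeq, stF_sum_eq (v ++ [x]) x, hstF x, hstF (!x), if_pos rfl,
      if_neg (by cases x <;> decide)]
    omega
  case gcd1 =>
    have hg : Nat.gcd p (p + q) = 1 := by
      rw [show p + q = q + p from Nat.add_comm p q, Nat.gcd_add_self_right]
      cases x
      · rw [hpdef, hqdef]; simpa using hgcd
      · rw [hpdef, hqdef, Nat.gcd_comm]; simpa using hgcd
    rw [hstF false, hstF true]
    cases x
    · rw [if_pos rfl, if_neg (by decide)]; exact hg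
    · rw [if_neg (by decide), if_pos rfl, Nat.gcd_comm]; exact hg
  case hp =>
    intro y
    rw [hCeq, hstF y]
    by_cases hyx : y = x
    · subst hyx; simpa using hpCx
    · have := hxne y hyx
      subst this
      simpa [hyx] using hpCx'
  case hmin =>
    intro y r hr
    rw [hCeq] at hr
    rw [hstF y]
    by_cases hyx : y = x
    · subst hyx; simpa using hminCx r hr
    · have := hxne y hyx
      subst this
      simp only [if_neg hyx]
      exact hminCx' r hr
  case sym =>
    intro y i j hi hj hij
    rw [hCeq] at hi hj ⊢
    rw [hClen] at hi hj
    rw [hstF y] at hij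
    by_cases hyx : y = x
    · rw [if_pos hyx] at hij
      rw [DCw i (by omega), DCw j (by omega)]
      exact hsymx i j (by omega) (by omega) (by omega)
    · rw [if_neg hyx] at hij
      have e1 : C.getD i false = C.getD (N + p - 1 - i) false := by
        have := palD hCpal (i := i) (by omega)
        rwa [hClen] at this
      have e2 : C.getD (N + p - 1 - i) false = C.getD j false := by
        apply hpD hpC (by rw [hClen]; omega) (by rw [hClen]; omega)
        have hjv : j = N - 1 - i := by omega
        rw [hjv]
        conv_lhs => rw [show N + p - 1 - i = (N - 1 - i) + p from by omega]
        rw [Nat.add_mod_right]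
      rw [e1, e2]
  case pen =>
    intro y h2
    rw [hCeq]
    rw [hstF y] at h2 ⊢
    by_cases hyx : y = x
    · rw [if_pos hyx] at h2 ⊢
      rw [DCw (p - 2) (by omega), hyx]
      exact hpenx h2
    · rw [if_neg hyx] at h2 ⊢
      have hy : y = !x := hxne y hyx
      rw [show p + q - 2 = N from by omega, DCN, hy, Bool.not_not]
  case lst =>
    intro y
    rw [hCeq, hstF y]
    by_cases hyx : y = x
    · rw [if_pos hyx, hyx]
      rw [gD_append_left (l := C) (r := [x]) (by omega), DCL (p - 1) (by omega)]
      exact hlstu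
    · have hy : y = !x := hxne y hyx
      rw [if_neg hyx, hy]
      rcases Nat.lt_or_ge 1 p with hp2 | hp2
      · rw [gD_append_left (l := C) (r := [!x]) (by omega),
          show p + q - 1 = N + 1 + 0 from by omega, DCR 0 (by omega),
          show p - 2 - 0 = p - 2 from by omega]
        exact hpenx (by omega)
      · have hp1' : p = 1 := by omega
        rw [gD_append_right (l := C) (r := [!x]) (by omega), hClen,
          show p + q - 1 - (N + p) = 0 from by omega]
        rfl

theorem inv_all (v : List Bool) : Inv v := by
  induction v using List.reverseRecOn with
  | nil => exact inv_nil
  | append_singleton v x ih => exact inv_step v x ih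

end Per
namespace Per

theorem minPeriod_psi (v : List Bool) :
    minPeriod (psi v) = min (stF v false) (stF v true) := by
  have inv := inv_all v
  set w := psi v with hw
  set a := stF v false with hadef
  set b := stF v true with hbdef
  have ha1 : 1 ≤ a := by rw [hadef]; exact stF_pos v false
  have hb1 : 1 ≤ b := by rw [hbdef]; exact stF_pos v true
  have hlen : w.length + 2 = a + b := inv.len
  set N := w.length with hN
  have hpa : HasPeriod w a := by
    have := hasPeriod_prefix (inv.hp false)
    rwa [← hadef] at this
  have hpb : HasPeriod w b := by
    have := hasPeriod_prefix (inv.hp true)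
    rwa [← hbdef] at this
  apply minPeriod_eq
  · rcases Nat.le_total a b with h | h
    · rwa [min_eq_left h]
    · rwa [min_eq_right h]
  · intro r hr
    by_contra hcon
    push_neg at hcon
    have hr0 : 0 < r := hr.1
    have hmin2 : 2 ≤ min a b := by omega
    have ha2 : 2 ≤ a := by omega
    have hb2 : 2 ≤ b := by omega
    have hg1 : HasPeriod w (Nat.gcd r a) := by
      apply fine_wilf hr hpa
      have : 1 ≤ Nat.gcd r a := Nat.gcd_pos_of_pos_left _ hr0
      omega
    have hg1a : Nat.gcd r a ∣ a := Nat.gcd_dvd_right r a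
    have hg1pos : 0 < Nat.gcd r a := Nat.gcd_pos_of_pos_left _ hr0
    have hg1le : Nat.gcd r a ≤ r := Nat.le_of_dvd hr0 (Nat.gcd_dvd_left r a)
    have hg2 : HasPeriod w (Nat.gcd (Nat.gcd r a) b) := by
      apply fine_wilf hg1 hpb
      have : 1 ≤ Nat.gcd (Nat.gcd r a) b := Nat.gcd_pos_of_pos_left _ hg1pos
      omega
    have hg2dvd : Nat.gcd (Nat.gcd r a) b ∣ Nat.gcd a b :=
      Nat.dvd_gcd ((Nat.gcd_dvd_left _ _).trans hg1a) (Nat.gcd_dvd_right _ _)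
    have hone : Nat.gcd (Nat.gcd r a) b = 1 := by
      have := inv.gcd1
      rw [← hadef, ← hbdef] at this
      rw [this] at hg2dvd
      exact Nat.eq_one_of_dvd_one hg2dvd
    rw [hone] at hg2
    have hpenF : w.getD (a - 2) false = true := by
      have := inv.pen false (by rw [← hadef]; exact ha2)
      rw [← hadef] at this
      simpa using this
    have hpenT : w.getD (b - 2) false = false := by
      have := inv.pen true (by rw [← hbdef]; exact hb2)
      rw [← hbdef] at this
      simpa using this
    have heq : w.getD (a - 2) false = w.getD (b - 2) false := by
      apply hpD hg2 (by omega) (by omega)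
      simp [Nat.mod_one]
    rw [hpenF, hpenT] at heq
    exact absurd heq (by simp)

end Per
namespace Per

theorem fibF_two (n : ℕ) : fibF (n+2) = fibF (n+1) + fibF n := rfl

theorem fibF_pos (n : ℕ) : 1 ≤ fibF n := by
  induction n using Nat.strong_induction_on with
  | _ n ih =>
    match n with
    | 0 => exact le_refl 1
    | 1 => exact le_refl 1
    | n + 2 =>
      have := ih (n+1) (by omega)
      rw [fibF_two]
      omega

theorem fibF_mono (n : ℕ) : fibF n ≤ fibF (n+1) := by
  match n with
  | 0 => exact le_refl 1
  | n + 1 =>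
    rw [fibF_two]
    have := fibF_pos n
    omega

@[simp] theorem length_vN (n : ℕ) : (vN n).length = n := by simp [vN]

theorem vN_succ (n : ℕ) : vN (n+1) = vN n ++ [decide (n % 2 = 1)] := by
  simp [vN, List.range_succ]

@[simp] theorem length_E (v : List Bool) : (E v).length = v.length := by simp [E]

theorem E_append (u t : List Bool) : E (u ++ t) = E u ++ E t := by simp [E]

theorem E_single (y : Bool) : E [y] = [!y] := rfl

theorem EE (v : List Bool) : E (E v) = v := by
  simp [E, List.map_map, Function.comp_def]

theorem dneg (n : ℕ) : decide ((n+1) % 2 = 1) = !decide (n % 2 = 1) := by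
  rcases Nat.mod_two_eq_zero_or_one n with h | h
  · have h2 : (n+1) % 2 = 1 := by omega
    rw [h2, h]
    decide
  · have h2 : (n+1) % 2 = 0 := by omega
    rw [h2, h]
    decide

theorem stR_E : ∀ (l : List Bool) (y : Bool), stR (l.map (!·)) y = stR l (!y) := by
  intro l
  induction l with
  | nil => intro y; rfl
  | cons a l ih =>
    intro y
    simp only [List.map_cons, stR]
    cases a <;> cases y <;> simp [ih, Nat.add_comm]

theorem stF_E (v : List Bool) (y : Bool) : stF (E v) y = stF v (!y) := by
  unfold stF
  rw [E, ← List.map_reverse]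
  exact stR_E v.reverse y

theorem cat_inj {u w : List Bool} {a b : Bool} (h : u ++ [a] = w ++ [b]) : u = w ∧ a = b := by
  have h2 := List.append_inj' h (by simp)
  refine ⟨h2.1, ?_⟩
  have := h2.2
  simpa using this

theorem stF_vN (n : ℕ) : stF (vN n) (decide (n % 2 = 1)) = fibF (n+1) ∧
    stF (vN n) (!decide (n % 2 = 1)) = fibF n := by
  induction n with
  | zero => exact ⟨rfl, rfl⟩
  | succ n ih =>
    obtain ⟨ih1, ih2⟩ := ih
    have hsum : stF (vN n) false + stF (vN n) true = fibF (n+1) + fibF n := by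
      have := stF_sum_eq (vN n) (decide (n % 2 = 1))
      omega
    constructor
    · rw [vN_succ, stF_append, dneg, if_neg (by cases (decide (n % 2 = 1)) <;> decide)]
      rw [fibF_two]
      omega
    · rw [vN_succ, stF_append, dneg, Bool.not_not, if_pos rfl]
      exact ih1

theorem keyZ (m : ℕ) (u : List Bool) (hu : u.length = m) (z : Bool) :
    ((m = 0 ∨ ∃ u', (u' = vN (m-1) ∨ u' = E (vN (m-1))) ∧ u = u' ++ [!z]) ∧
      (u = vN m ∨ u = E (vN m)))
    ↔ (u ++ [z] = vN (m+1) ∨ u ++ [z] = E (vN (m+1))) := by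
  rcases Nat.eq_zero_or_pos m with rfl | hm
  · have hu0 : u = [] := List.length_eq_zero_iff.mp hu
    subst hu0
    constructor
    · rintro ⟨-, -⟩
      cases z
      · left; decide
      · right; decide
    · intro _
      exact ⟨Or.inl rfl, Or.inl rfl⟩
  · obtain ⟨k, rfl⟩ : ∃ k, m = k + 1 := ⟨m - 1, by omega⟩
    set c := decide (k % 2 = 1) with hc
    have h1 : vN (k+1) = vN k ++ [c] := vN_succ k
    have h2 : vN (k+2) = vN (k+1) ++ [!c] := by rw [vN_succ (k+1), dneg k, ← hc]
    have hE1 : E (vN (k+1)) = E (vN k) ++ [!c] := by rw [h1, E_append, E_single]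
    have hE2 : E (vN (k+2)) = E (vN (k+1)) ++ [c] := by
      rw [h2, E_append, E_single, Bool.not_not]
    simp only [Nat.add_sub_cancel]
    constructor
    · rintro ⟨hA, hB⟩
      rcases hA with h0 | ⟨u', hu', rfl⟩
      · exact absurd h0 (by omega)
      rcases hB with hB | hB
      · left
        have hzc : (!z) = c := (cat_inj (hB.trans h1)).2
        rw [h2, ← hB]
        have : z = !c := by rw [← hzc, Bool.not_not]
        rw [this]
      · right
        have hzc : (!z) = !c := (cat_inj (hB.trans hE1)).2
        rw [hE2, ← hB]
        have : z = c := by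
          have := congrArg (!·) hzc
          simpa using this
        rw [this]
    · rintro (hB | hB)
      · obtain ⟨hu1, hz1⟩ := cat_inj (hB.trans h2)
        constructor
        · refine Or.inr ⟨vN k, Or.inl rfl, ?_⟩
          rw [hu1, h1, hz1, Bool.not_not]
        · left; exact hu1
      · obtain ⟨hu1, hz1⟩ := cat_inj (hB.trans hE2)
        constructor
        · refine Or.inr ⟨E (vN k), Or.inr rfl, ?_⟩
          rw [hu1, hE1, hz1]
        · right; exact hu1

end Per
namespace Per

theorem num_main : ∀ (m : ℕ) (v : List Bool), v.length = m →
    ((stF v false + stF v true ≤ fibF (m+1) + fibF m ∧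
      (stF v false + stF v true = fibF (m+1) + fibF m ↔ v = vN m ∨ v = E (vN m))) ∧
    (∀ x : Bool, stF v x ≤ fibF (m+1) ∧
      (stF v x = fibF (m+1) ↔
        (m = 0 ∨ ∃ u, (u = vN (m-1) ∨ u = E (vN (m-1))) ∧ v = u ++ [!x])))) := by
  intro m
  induction m with
  | zero =>
    intro v hv
    have hv0 : v = [] := List.length_eq_zero_iff.mp hv
    subst hv0
    refine ⟨⟨by decide, ?_⟩, ?_⟩
    · constructor
      · intro _; left; rfl
      · intro _; decide
    · intro x
      refine ⟨Nat.le_of_eq rfl, ?_⟩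
      constructor
      · intro _; left; rfl
      · intro _; rfl
  | succ m ih =>
    intro v hv
    rcases List.eq_nil_or_concat v with rfl | ⟨u, y, rfl⟩
    · simp at hv
    simp only [List.concat_eq_append] at hv ⊢
    have hul : u.length = m := by simpa using hv
    obtain ⟨⟨hSle, hSiff⟩, hF⟩ := ih u hul
    obtain ⟨hFyle, hFyiff⟩ := hF y
    have hposF := stF_pos u false
    have hposT := stF_pos u true
    have hfp0 := fibF_pos m
    have hfp1 := fibF_pos (m+1)
    have hfib2 : fibF (m+1+1) = fibF (m+1) + fibF m := fibF_two m
    have hvy : stF (u ++ [y]) y = stF u y := by rw [stF_append, if_pos rfl]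
    have hvny : stF (u ++ [y]) (!y) = stF u false + stF u true := by
      rw [stF_append, if_neg (by cases y <;> decide)]
    constructor
    · have hSv : stF (u++[y]) false + stF (u++[y]) true
          = stF u y + (stF u false + stF u true) := by
        have h1 := stF_sum_eq (u++[y]) y
        rw [hvy, hvny] at h1
        omega
      constructor
      · rw [hSv]
        omega
      · rw [hSv]
        have hiff2 : (stF u y + (stF u false + stF u true) = fibF (m+1+1) + fibF (m+1))
            ↔ (stF u y = fibF (m+1) ∧ stF u false + stF u true = fibF (m+1) + fibF m) := by
          constructor
          · intro h; constructor <;> omega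
          · intro h; omega
        rw [hiff2, hFyiff, hSiff]
        exact keyZ m u hul y
    · intro x
      by_cases hxy : x = y
      · subst hxy
        refine ⟨?_, ?_, ?_⟩
        · rw [hvy]
          have := fibF_mono (m+1)
          omega
        · intro h
          rw [hvy] at h
          omega
        · rintro (h0 | ⟨u', hu', heq⟩)
          · exact absurd h0 (by omega)
          · have := (cat_inj heq).2
            exact absurd this (by cases x <;> decide)
      · have hxy' : y = !x := by cases x <;> cases y <;> revert hxy <;> decide
        have hvx : stF (u ++ [y]) x = stF u false + stF u true := by
          rw [stF_append, if_neg hxy]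
        refine ⟨?_, ?_, ?_⟩
        · rw [hvx]
          omega
        · intro h
          rw [hvx] at h
          have hU : u = vN m ∨ u = E (vN m) := hSiff.mp (h.trans hfib2)
          refine Or.inr ⟨u, ?_, ?_⟩
          · simpa using hU
          · rw [hxy']
        · rintro (h0 | ⟨u', hu', heq⟩)
          · exact absurd h0 (by omega)
          · rw [hxy'] at heq
            have huu : u = u' := (cat_inj heq).1
            have hU : u = vN m ∨ u = E (vN m) := by
              rw [huu]; simpa using hu'
            have hs := hSiff.mpr hU
            rw [hvx, hs]
            exact hfib2.symm

end Per
namespace Per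

theorem cOp_cat (t : List Bool) (a b : Bool) :
    cOp ((t ++ [a]) ++ [b]) = (t ++ [b]) ++ [a] := by
  simp [cOp, dOp, List.reverse_append]

theorem min_stF_vN (n : ℕ) :
    min (stF (vN n) false) (stF (vN n) true) = fibF n := by
  obtain ⟨h1, h2⟩ := stF_vN n
  have hm : fibF n ≤ fibF (n+1) := fibF_mono n
  rcases hcb : decide (n % 2 = 1) with _ | _
  · rw [hcb] at h1 h2
    simp only [Bool.not_false] at h2
    rw [h1, h2]
    exact min_eq_right hm
  · rw [hcb] at h1 h2
    simp only [Bool.not_true] at h2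
    rw [h1, h2]
    exact min_eq_left hm

theorem four_iff (k : ℕ) (u : List Bool) (y : Bool) :
    (∃ u', (u' = vN k ∨ u' = E (vN k)) ∧ u = u' ++ [!y]) ↔
      (u ++ [y] = vN (k+2) ∨ u ++ [y] = E (vN (k+2)) ∨ u ++ [y] = cOp (vN (k+2)) ∨
        u ++ [y] = E (cOp (vN (k+2)))) := by
  set c := decide (k % 2 = 1) with hc
  have h1 : vN (k+1) = vN k ++ [c] := vN_succ k
  have h2 : vN (k+2) = (vN k ++ [c]) ++ [!c] := by
    rw [vN_succ (k+1), dneg k, ← hc, h1]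
  have hW2 : E (vN (k+2)) = (E (vN k) ++ [!c]) ++ [c] := by
    rw [h2, E_append, E_append, E_single, E_single, Bool.not_not]
  have hW3 : cOp (vN (k+2)) = (vN k ++ [!c]) ++ [c] := by
    rw [h2, cOp_cat]
  have hW4 : E (cOp (vN (k+2))) = (E (vN k) ++ [c]) ++ [!c] := by
    rw [hW3, E_append, E_append, E_single, E_single, Bool.not_not]
  clear_value c
  have hyor : ∀ z : Bool, z ≠ c → z = !c := by
    intro z hz; cases z <;> cases c <;> revert hz <;> decide
  constructor
  · rintro ⟨u', (rfl | rfl), rfl⟩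
    · by_cases hyc : y = c
      · right; right; left
        rw [hyc, hW3]
      · have hy : y = !c := hyor y hyc
        left
        rw [hy, Bool.not_not, h2]
    · by_cases hyc : y = c
      · right; left
        rw [hyc, hW2]
      · have hy : y = !c := hyor y hyc
        right; right; right
        rw [hy, Bool.not_not, hW4]
  · rintro (hEq | hEq | hEq | hEq)
    · obtain ⟨h3, h4⟩ := cat_inj (hEq.trans h2)
      exact ⟨vN k, Or.inl rfl, by rw [h3, h4, Bool.not_not]⟩
    · obtain ⟨h3, h4⟩ := cat_inj (hEq.trans hW2)
      exact ⟨E (vN k), Or.inr rfl, by rw [h3, h4]⟩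
    · obtain ⟨h3, h4⟩ := cat_inj (hEq.trans hW3)
      exact ⟨vN k, Or.inl rfl, by rw [h3, h4]⟩
    · obtain ⟨h3, h4⟩ := cat_inj (hEq.trans hW4)
      exact ⟨E (vN k), Or.inr rfl, by rw [h3, h4, Bool.not_not]⟩

theorem bound_iff (n : ℕ) (v : List Bool) (hv : v.length = n) :
    min (stF v false) (stF v true) ≤ fibF n ∧
    (min (stF v false) (stF v true) = fibF n ↔
      v = vN n ∨ v = E (vN n) ∨ v = cOp (vN n) ∨ v = E (cOp (vN n))) := by
  rcases List.eq_nil_or_concat v with rfl | ⟨u, y, rfl⟩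
  · have hn0 : n = 0 := by simpa using hv.symm
    subst hn0
    refine ⟨by decide, ?_⟩
    constructor
    · intro _; left; decide
    · intro _; decide
  · simp only [List.concat_eq_append] at hv ⊢
    rcases n with _ | m
    · simp at hv
    have hul : u.length = m := by simpa using hv
    have hminv : min (stF (u++[y]) false) (stF (u++[y]) true) = stF u y := by
      cases y
      · rw [stF_append, stF_append, if_pos rfl, if_neg (by decide)]
        have := stF_pos u true
        exact min_eq_left (by omega)
      · rw [stF_append, stF_append, if_neg (by decide), if_pos rfl]
        have := stF_pos u false
        exact min_eq_right (by omega)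
    obtain ⟨-, hF⟩ := num_main m u hul
    obtain ⟨hle, hiff⟩ := hF y
    constructor
    · rw [hminv]; exact hle
    · rw [hminv, hiff]
      rcases Nat.eq_zero_or_pos m with rfl | hm
      · have hu0 : u = [] := List.length_eq_zero_iff.mp hul
        subst hu0
        simp only [List.nil_append]
        constructor
        · intro _
          cases y
          · left; decide
          · right; left; decide
        · intro _; exact Or.inl trivial
      · obtain ⟨k, rfl⟩ : ∃ k, m = k + 1 := ⟨m - 1, by omega⟩
        simp only [Nat.add_sub_cancel]
        rw [or_iff_right (by omega : ¬(k + 1 = 0))]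
        exact four_iff k u y

end Per
theorem stmt12 (n : ℕ) (v : List Bool) (hv : v.length = n) :
    minPeriod (psi v) ≤ minPeriod (psi (vN n)) ∧
    minPeriod (psi (vN n)) = fibF n ∧
    (minPeriod (psi v) = minPeriod (psi (vN n)) ↔
      v = vN n ∨ v = E (vN n) ∨ v = cOp (vN n) ∨ v = E (cOp (vN n))) := by
  obtain ⟨hb, hiff⟩ := Per.bound_iff n v hv
  have h1 := Per.minPeriod_psi v
  have h2 : minPeriod (psi (vN n)) = fibF n := by
    rw [Per.minPeriod_psi, Per.min_stF_vN]
  refine ⟨?_, h2, ?_⟩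
  · rw [h1, h2]; exact hb
  · rw [h1, h2]; exact hiff
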